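/- Let (X,Y,Z) be random variables taking values in 𝒳×ℝ×𝒵 with 𝒵 ⊆ ℝ^{d'}, and suppose the law of Z has a density p with respect to Lebesgue measure on ℝ^{d'}. Let k : 𝒵×𝒵 → ℝ be continuous, bounded, and integrally strictly positive definite. Let f : 𝒳 → ℝ be measurable with E[(Y−f(X))² k(Z,Z)] < ∞ and E[|Y−f(X)|] < ∞, and assume the function g(z) := E[Y−f(X) | Z=z]·p(z) satisfies ∫ g(z)² dz < ∞. Then R_k(f) = 0 if and only if E[Y−f(X) | Z] = 0 almost surely (i.e., for P_Z-almost all z). -/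

import Mathlib

open MeasureTheory
open scoped ENNReal NNReal

/-- A kernel `k` on `ℝ^{d'}` is *integrally strictly positive definite* (ISPD) if
`∬ g(z) k(z,z') g(z') dz dz' > 0` for every measurable `g` with `0 < ∫ g² < ∞`. -/
def IsISPDKernel {d' : ℕ} (k : (Fin d' → ℝ) → (Fin d' → ℝ) → ℝ) : Prop :=
  ∀ g : (Fin d' → ℝ) → ℝ, Measurable g →
    0 < ∫ z, (g z) ^ 2 →
    Integrable (fun z => (g z) ^ 2) →
    0 < ∫ q : (Fin d' → ℝ) × (Fin d' → ℝ),
        g q.1 * k q.1 q.2 * g q.2 ∂(volume.prod volume)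

/-- Paper's Theorem 3.1: for a continuous, bounded, integrally
strictly positive definite kernel `k`, the MMR risk
`R_k(f) = ∫ (y−f(x))(y'−f(x'))k(z,z') d(μ⊗μ)` vanishes if and only if
`E[Y − f(X) | Z] = 0` almost surely. -/
theorem mmr_risk_zero_iff_cmr
    {Ω 𝒳 : Type*} [MeasurableSpace Ω] [MeasurableSpace 𝒳] {d' : ℕ}
    (P : Measure Ω) [IsProbabilityMeasure P]
    (X : Ω → 𝒳) (Y : Ω → ℝ) (Z : Ω → (Fin d' → ℝ))
    (hX : Measurable X) (hY : Measurable Y) (hZ : Measurable Z)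
    -- the law of Z has density p with respect to Lebesgue measure
    (p : (Fin d' → ℝ) → ℝ) (hp_meas : Measurable p) (hp_nonneg : ∀ z, 0 ≤ p z)
    (hp : Measure.map Z P = volume.withDensity (fun z => ENNReal.ofReal (p z)))
    (k : (Fin d' → ℝ) → (Fin d' → ℝ) → ℝ)
    (hk_cont : Continuous (Function.uncurry k))
    (hk_bdd : ∃ C, ∀ z z', |k z z'| ≤ C)
    (hk_ispd : IsISPDKernel k)
    (f : 𝒳 → ℝ) (hf : Measurable f)
    (hmom : Integrable (fun ω => (Y ω - f (X ω)) ^ 2 * k (Z ω) (Z ω)) P)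
    (hL1 : Integrable (fun ω => |Y ω - f (X ω)|) P)
    -- g(z) := E[Y − f(X) | Z = z] · p(z) is square integrable
    (g : (Fin d' → ℝ) → ℝ) (hg_meas : Measurable g)
    (hg_rep : ∀ᵐ ω ∂P,
      g (Z ω)
        = (P[fun ω' => Y ω' - f (X ω') | MeasurableSpace.comap Z inferInstance]) ω
            * p (Z ω))
    (hg_sq : Integrable (fun z => (g z) ^ 2))
    (μ : Measure (𝒳 × ℝ × (Fin d' → ℝ)))
    (hμ : μ = Measure.map (fun ω => (X ω, Y ω, Z ω)) P) :
    (∫ q, (q.1.2.1 - f q.1.1) * (q.2.2.1 - f q.2.1) * k q.1.2.2 q.2.2.2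
        ∂(μ.prod μ)) = 0
      ↔ (P[fun ω' => Y ω' - f (X ω') | MeasurableSpace.comap Z inferInstance])
          =ᵐ[P] 0 := by
  subst hμ
  obtain ⟨C, hC⟩ := hk_bdd
  have hC0 : 0 ≤ C := (abs_nonneg _).trans (hC 0 0)
  set e : Ω → ℝ := fun ω => Y ω - f (X ω) with he_def
  have hmZ : MeasurableSpace.comap Z inferInstance ≤ (inferInstance : MeasurableSpace Ω) :=
    hZ.comap_le
  set m : Ω → ℝ := P[e | MeasurableSpace.comap Z inferInstance] with hm_def
  have he_meas : Measurable e := hY.sub (hf.comp hX)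
  have he_int : Integrable e P :=
    hL1.mono' he_meas.aestronglyMeasurable (ae_of_all _ fun ω => by
      simp [Real.norm_eq_abs, he_def])
  have hm_int : Integrable m P := integrable_condExp
  have hk_meas : Measurable (Function.uncurry k) := hk_cont.measurable
  have hk_meas' : Measurable (fun q : (Fin d' → ℝ) × (Fin d' → ℝ) => k q.1 q.2) := hk_meas
  -- the density is a.e. positive under the law of Z
  have hpZ_pos : ∀ᵐ ω ∂P, p (Z ω) ≠ 0 := by
    have hS : MeasurableSet {z : Fin d' → ℝ | p z = 0} := hp_meas (measurableSet_singleton 0)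
    have hmap : (Measure.map Z P) {z | p z = 0} = 0 := by
      rw [hp, withDensity_apply _ hS]
      have hz0 : ∀ᵐ z ∂(volume.restrict {z : Fin d' → ℝ | p z = 0}),
          ENNReal.ofReal (p z) = 0 := by
        refine (ae_restrict_iff' hS).mpr (ae_of_all _ fun z hz => ?_)
        simp only [Set.mem_setOf_eq] at hz
        simp [hz]
      calc ∫⁻ z in {z : Fin d' → ℝ | p z = 0}, ENNReal.ofReal (p z) ∂volume
          = ∫⁻ _ in {z : Fin d' → ℝ | p z = 0}, 0 ∂volume := lintegral_congr_ae hz0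
        _ = 0 := lintegral_zero
    have hmae : ∀ᵐ z ∂(Measure.map Z P), p z ≠ 0 := by
      rw [ae_iff]
      convert hmap using 2
      simp
    exact (ae_map_iff hZ.aemeasurable hS.compl).mp hmae
  -- factor the conditional expectation through Z
  set φ : (Fin d' → ℝ) → ℝ := fun z => if p z = 0 then 0 else g z / p z with hφ_def
  have hφ : Measurable φ :=
    Measurable.ite (hp_meas (measurableSet_singleton 0)) measurable_const
      (hg_meas.div hp_meas)
  have hmφ : m =ᵐ[P] fun ω => φ (Z ω) := by
    filter_upwards [hg_rep, hpZ_pos] with ω hω hω'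
    simp only [hφ_def, hω', if_false]
    rw [hω]
    field_simp
  set h : (Fin d' → ℝ) → ℝ := fun z => φ z * p z with hh_def
  have hh : Measurable h := hφ.mul hp_meas
  -- h is integrable
  have hφZ_int : Integrable (fun ω => φ (Z ω)) P := hm_int.congr hmφ
  have hφ_int_map : Integrable φ (Measure.map Z P) := by
    rwa [integrable_map_measure hφ.aestronglyMeasurable hZ.aemeasurable]
  have hh_int : Integrable h volume := by
    have hfin : ∀ᵐ z ∂(volume : Measure (Fin d' → ℝ)), ENNReal.ofReal (p z) < ⊤ :=
      ae_of_all _ fun z => ENNReal.ofReal_lt_top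
    have := (integrable_withDensity_iff (by fun_prop) hfin).mp (hp ▸ hφ_int_map)
    refine this.congr (ae_of_all _ fun z => ?_)
    simp [hh_def, ENNReal.toReal_ofReal (hp_nonneg z)]
  -- pull-out property of the conditional expectation
  have pull : ∀ (ψ : (Fin d' → ℝ) → ℝ) (D : ℝ), Measurable ψ → (∀ z, |ψ z| ≤ D) →
      ∫ ω, e ω * ψ (Z ω) ∂P = ∫ ω, m ω * ψ (Z ω) ∂P := by
    intro ψ D hψ hD
    have hsm : StronglyMeasurable[MeasurableSpace.comap Z inferInstance] (fun ω => ψ (Z ω)) :=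
      (hψ.comp (comap_measurable Z)).stronglyMeasurable
    have h1 := condExp_stronglyMeasurable_mul_of_bound hmZ hsm he_int D
      (ae_of_all _ fun ω => by simpa [Real.norm_eq_abs] using hD (Z ω))
    calc ∫ ω, e ω * ψ (Z ω) ∂P
        = ∫ ω, ((fun ω => ψ (Z ω)) * e) ω ∂P := by
          refine integral_congr_ae (ae_of_all _ fun ω => ?_)
          simp [mul_comm]
      _ = ∫ ω, (P[(fun ω => ψ (Z ω)) * e | MeasurableSpace.comap Z inferInstance]) ω ∂P := (integral_condExp hmZ).symm
      _ = ∫ ω, ((fun ω => ψ (Z ω)) * m) ω ∂P := integral_congr_ae h1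
      _ = ∫ ω, m ω * ψ (Z ω) ∂P := by
          refine integral_congr_ae (ae_of_all _ fun ω => ?_)
          simp [mul_comm]
  -- change of variables from P to Lebesgue
  have push : ∀ (ψ : (Fin d' → ℝ) → ℝ), Measurable ψ →
      ∫ ω, φ (Z ω) * ψ (Z ω) ∂P = ∫ z, h z * ψ z ∂volume := by
    intro ψ hψ
    have h1 : ∫ ω, φ (Z ω) * ψ (Z ω) ∂P = ∫ z, φ z * ψ z ∂(Measure.map Z P) :=
      (integral_map hZ.aemeasurable ((hφ.mul hψ).aestronglyMeasurable)).symm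
    rw [h1, hp]
    have h2 : (fun z => ENNReal.ofReal (p z))
        = (fun z => (((p z).toNNReal : ENNReal))) := rfl
    rw [h2, integral_withDensity_eq_integral_smul hp_meas.real_toNNReal]
    refine integral_congr_ae (ae_of_all _ fun z => ?_)
    simp only [NNReal.smul_def, Real.coe_toNNReal _ (hp_nonneg z), hh_def, smul_eq_mul]
    ring
  -- combined: integrate e against a bounded function of Z
  have step : ∀ (ψ : (Fin d' → ℝ) → ℝ) (D : ℝ), Measurable ψ → (∀ z, |ψ z| ≤ D) →
      ∫ ω, e ω * ψ (Z ω) ∂P = ∫ z, h z * ψ z ∂volume := by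
    intro ψ D hψ hD
    rw [pull ψ D hψ hD, ← push ψ hψ]
    exact integral_congr_ae (hmφ.mono fun ω hω => by simp only [hω])
  -- rewrite the risk as an integral over P ⊗ P
  set T : Ω → 𝒳 × ℝ × (Fin d' → ℝ) := fun ω => (X ω, Y ω, Z ω) with hT_def
  have hT : Measurable T := hX.prodMk (hY.prodMk hZ)
  set F : Ω × Ω → ℝ := fun q => e q.1 * e q.2 * k (Z q.1) (Z q.2) with hF_def
  have hF_meas : Measurable F := by
    apply Measurable.mul
    · exact (he_meas.comp measurable_fst).mul (he_meas.comp measurable_snd)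
    · exact hk_meas'.comp ((hZ.comp measurable_fst).prodMk (hZ.comp measurable_snd))
  have hF_int : Integrable F (P.prod P) := by
    have hmaj : Integrable (fun q : Ω × Ω => (|e q.1| * |e q.2|) * C) (P.prod P) :=
      (hL1.mul_prod hL1).mul_const C
    refine hmaj.mono' hF_meas.aestronglyMeasurable (ae_of_all _ fun q => ?_)
    have : |F q| ≤ (|e q.1| * |e q.2|) * C := by
      rw [hF_def]
      simp only [abs_mul]
      exact mul_le_mul_of_nonneg_left (hC _ _) (by positivity)
    calc ‖F q‖ = |F q| := rfl
      _ ≤ (|e q.1| * |e q.2|) * C := this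
  have hG_meas : Measurable (fun q : (𝒳 × ℝ × (Fin d' → ℝ)) × (𝒳 × ℝ × (Fin d' → ℝ)) =>
      (q.1.2.1 - f q.1.1) * (q.2.2.1 - f q.2.1) * k q.1.2.2 q.2.2.2) := by
    apply Measurable.mul
    · exact (measurable_fst.snd.fst.sub (hf.comp measurable_fst.fst)).mul
        (measurable_snd.snd.fst.sub (hf.comp measurable_snd.fst))
    · exact hk_meas'.comp (measurable_fst.snd.snd.prodMk measurable_snd.snd.snd)
  have riskP :
      (∫ q, (q.1.2.1 - f q.1.1) * (q.2.2.1 - f q.2.1) * k q.1.2.2 q.2.2.2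
        ∂((Measure.map T P).prod (Measure.map T P)))
      = ∫ q, F q ∂(P.prod P) := by
    rw [Measure.map_prod_map _ _ hT hT,
      integral_map (hT.prodMap hT).aemeasurable hG_meas.aestronglyMeasurable]
    rfl
  -- the inner kernel integral
  set B : (Fin d' → ℝ) → ℝ := fun z => ∫ z', h z' * k z z' ∂volume with hB_def
  have hB_sm : StronglyMeasurable B := by
    have : StronglyMeasurable (fun q : (Fin d' → ℝ) × (Fin d' → ℝ) => h q.2 * k q.1 q.2) :=
      ((hh.comp measurable_snd).mul hk_meas').stronglyMeasurable
    exact this.integral_prod_right'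
  have hB : Measurable B := hB_sm.measurable
  have hintk : ∀ z, Integrable (fun z' => h z' * k z z') volume := by
    intro z
    refine (hh_int.abs.const_mul C).mono'
      ((hh.mul (hk_meas'.comp (measurable_const.prodMk measurable_id))).aestronglyMeasurable)
      (ae_of_all _ fun z' => ?_)
    rw [Real.norm_eq_abs, abs_mul]
    calc |h z'| * |k z z'| ≤ |h z'| * C :=
          mul_le_mul_of_nonneg_left (hC _ _) (abs_nonneg _)
      _ = C * |h z'| := mul_comm _ _
  set D : ℝ := C * ∫ z', |h z'| ∂volume with hD_def
  have hB_bdd : ∀ z, |B z| ≤ D := by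
    intro z
    have h1 : |B z| ≤ ∫ z', |h z'| * |k z z'| ∂volume := by
      simpa [Real.norm_eq_abs, abs_mul] using
        norm_integral_le_integral_norm (fun z' => h z' * k z z')
    have h2 : ∫ z', |h z'| * |k z z'| ∂volume ≤ ∫ z', C * |h z'| ∂volume := by
      refine integral_mono ?_ (hh_int.abs.const_mul C) fun z' => ?_
      · have := (hintk z).abs
        refine this.congr (ae_of_all _ fun z' => ?_)
        simp [abs_mul]
      calc |h z'| * |k z z'| ≤ |h z'| * C :=
            mul_le_mul_of_nonneg_left (hC _ _) (abs_nonneg _)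
        _ = C * |h z'| := mul_comm _ _
    calc |B z| ≤ ∫ z', |h z'| * |k z z'| ∂volume := h1
      _ ≤ ∫ z', C * |h z'| ∂volume := h2
      _ = D := by rw [hD_def, integral_const_mul]
  -- compute the risk as ∫ h·B
  have keyI : ∫ q, F q ∂(P.prod P) = ∫ z, h z * B z ∂volume := by
    have h1 : ∫ q, F q ∂(P.prod P) = ∫ ω, ∫ ω', F (ω, ω') ∂P ∂P := integral_prod F hF_int
    have hA : ∀ z, (∫ ω', e ω' * k z (Z ω') ∂P) = B z := by
      intro z
      have := step (fun z' => k z z') C (hk_meas'.comp (measurable_const.prodMk measurable_id))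
        (fun z' => hC z z')
      simpa [hB_def] using this
    have h2 : ∀ ω, (∫ ω', F (ω, ω') ∂P) = e ω * B (Z ω) := by
      intro ω
      have : (∫ ω', F (ω, ω') ∂P) = e ω * ∫ ω', e ω' * k (Z ω) (Z ω') ∂P := by
        rw [← integral_const_mul]
        refine integral_congr_ae (ae_of_all _ fun ω' => ?_)
        simp [hF_def]; ring
      rw [this, hA (Z ω)]
    have h3 : ∫ ω, ∫ ω', F (ω, ω') ∂P ∂P = ∫ ω, e ω * B (Z ω) ∂P :=
      integral_congr_ae (ae_of_all _ fun ω => h2 ω)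
    rw [h1, h3]
    exact step B D hB hB_bdd
  -- the double Lebesgue integral
  set J : ℝ := ∫ q : (Fin d' → ℝ) × (Fin d' → ℝ), h q.1 * k q.1 q.2 * h q.2
      ∂(volume.prod volume) with hJ_def
  have hG2_meas : Measurable (fun q : (Fin d' → ℝ) × (Fin d' → ℝ) =>
      h q.1 * k q.1 q.2 * h q.2) :=
    ((hh.comp measurable_fst).mul hk_meas').mul (hh.comp measurable_snd)
  have hG2_int : Integrable (fun q : (Fin d' → ℝ) × (Fin d' → ℝ) =>
      h q.1 * k q.1 q.2 * h q.2) (volume.prod volume) := by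
    have hmaj : Integrable (fun q : (Fin d' → ℝ) × (Fin d' → ℝ) =>
        (|h q.1| * |h q.2|) * C) (volume.prod volume) :=
      (hh_int.abs.mul_prod hh_int.abs).mul_const C
    refine hmaj.mono' hG2_meas.aestronglyMeasurable (ae_of_all _ fun q => ?_)
    rw [Real.norm_eq_abs, abs_mul, abs_mul]
    calc |h q.1| * |k q.1 q.2| * |h q.2| ≤ |h q.1| * C * |h q.2| := by
          refine mul_le_mul_of_nonneg_right ?_ (abs_nonneg _)
          exact mul_le_mul_of_nonneg_left (hC _ _) (abs_nonneg _)
      _ = (|h q.1| * |h q.2|) * C := by ring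
  have keyJ : J = ∫ z, h z * B z ∂volume := by
    rw [hJ_def, integral_prod _ hG2_int]
    refine integral_congr_ae (ae_of_all _ fun z => ?_)
    have : (∫ z', h z * k z z' * h z' ∂volume) = h z * ∫ z', h z' * k z z' ∂volume := by
      rw [← integral_const_mul]
      refine integral_congr_ae (ae_of_all _ fun z' => ?_)
      ring
    simpa [hB_def] using this
  -- equivalence between the conditional expectation vanishing and h vanishing
  have hφset : MeasurableSet {z : Fin d' → ℝ | φ z = 0} := hφ (measurableSet_singleton 0)
  have hiff : (m =ᵐ[P] 0) ↔ (h =ᵐ[volume] 0) := by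
    constructor
    · intro h0
      have hφZ0 : ∀ᵐ ω ∂P, φ (Z ω) = 0 := by
        filter_upwards [hmφ, h0] with ω h1 h2
        rw [← h1, h2]; rfl
      have hmap0 : ∀ᵐ z ∂(Measure.map Z P), φ z = 0 :=
        (ae_map_iff hZ.aemeasurable hφset).mpr hφZ0
      rw [hp] at hmap0
      have := (ae_withDensity_iff hp_meas.ennreal_ofReal).mp hmap0
      filter_upwards [this] with z hz
      by_cases hpz : p z = 0
      · simp [hh_def, hpz]
      · have : ENNReal.ofReal (p z) ≠ 0 := by
          simp [ENNReal.ofReal_eq_zero, not_le]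
          exact lt_of_le_of_ne (hp_nonneg z) (Ne.symm hpz)
        simp [hh_def, hz this]
    · intro h0
      have hwd : ∀ᵐ z ∂(volume.withDensity (fun z => ENNReal.ofReal (p z))), φ z = 0 := by
        rw [ae_withDensity_iff hp_meas.ennreal_ofReal]
        filter_upwards [h0] with z hz hpz
        have hpz' : p z ≠ 0 := by
          intro h'
          exact hpz (by simp [h'])
        have : φ z * p z = 0 := hz
        rcases mul_eq_zero.mp this with h' | h'
        · exact h'
        · exact absurd h' hpz'
      rw [← hp] at hwd
      have hφZ0 : ∀ᵐ ω ∂P, φ (Z ω) = 0 :=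
        (ae_map_iff hZ.aemeasurable hφset).mp hwd
      filter_upwards [hmφ, hφZ0] with ω h1 h2
      rw [h1, h2]; rfl
  -- square integrability of h
  have hh_sq : Integrable (fun z => (h z) ^ 2) volume := by
    refine hg_sq.mono' ((hh.pow_const 2).aestronglyMeasurable) (ae_of_all _ fun z => ?_)
    rw [Real.norm_eq_abs, abs_of_nonneg (sq_nonneg _)]
    by_cases hpz : p z = 0
    · simp [hh_def, hφ_def, hpz]
      positivity
    · have : h z = g z := by
        simp only [hh_def, hφ_def, hpz, if_false]
        field_simp
      rw [this]
  -- conclude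
  rw [riskP, keyI]
  constructor
  · intro h0
    rw [hiff]
    by_contra hne
    have hsq_pos : 0 < ∫ z, (h z) ^ 2 ∂volume := by
      rcases lt_or_eq_of_le (integral_nonneg (f := fun z => (h z) ^ 2) fun z => sq_nonneg (h z)) with h' | h'
      · exact h'
      · exfalso
        apply hne
        have := (integral_eq_zero_iff_of_nonneg (f := fun z => (h z) ^ 2) (fun z => sq_nonneg (h z)) hh_sq).mp h'.symm
        filter_upwards [this] with z hz
        have : (h z) ^ 2 = 0 := hz
        exact pow_eq_zero_iff (n := 2) (by norm_num) |>.mp this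
    have hpos : 0 < J := hk_ispd h hh hsq_pos hh_sq
    rw [keyJ, h0] at hpos
    exact lt_irrefl 0 hpos
  · intro h0
    have hh0 : h =ᵐ[volume] 0 := hiff.mp h0
    have : ∀ᵐ z ∂(volume : Measure (Fin d' → ℝ)), h z * B z = 0 := by
      filter_upwards [hh0] with z hz
      rw [show h z = 0 from hz, zero_mul]
    rw [integral_congr_ae this, integral_zero]
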